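/- Let N ≥ 1 be an integer, suppose ζ² is a primitive N-th root of unity, set E⁰ := { e ∈ E : (e, f) ≡ 0 (mod N) for all f ∈ E }, and let S ⊂ E be a complete set of representatives of the cosets of E⁰ in E. Then { Z_s : s ∈ S } is a basis of the quantum torus T_ζ(E) as a module over its center; in particular, T_ζ(E) is a free module over its center of rank equal to the index [E : E⁰]. -/

import Mathlib

/-- The kernel sublattice `E⁰ = {e ∈ E | ω(e,f) ≡ 0 (mod N) for all f ∈ E}`. -/
def kernelLattice {E : Type*} [AddCommGroup E]
    (ω : E →ₗ[ℤ] E →ₗ[ℤ] ℤ) (N : ℕ) : AddSubgroup E where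
  carrier := {e : E | ∀ f : E, (N : ℤ) ∣ ω e f}
  zero_mem' := by intro f; simp
  add_mem' := by
    intro a b ha hb f
    rw [map_add, LinearMap.add_apply]
    exact dvd_add (ha f) (hb f)
  neg_mem' := by
    intro a ha f
    rw [map_neg, LinearMap.neg_apply]
    exact (ha f).neg_right

/-- with `E` a free `ℤ`-module of finite rank with skew-symmetric form `ω`,
and `T_ζ(E)` the quantum torus (`ℂ`-algebra `A` with basis `(Z_e)`, `Z_0 = 1`,
`Z_a · Z_b = ζ^{ω(a,b)} Z_{a+b}`): if `ζ²` is a primitive `N`-th root of unity and `S`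
is a complete set of representatives of the cosets of `E⁰` in `E`, then `{Z_s : s ∈ S}`
is a basis of `T_ζ(E)` over its center; in particular `T_ζ(E)` is free over its center
of rank the index `[E : E⁰]`. -/
theorem stmt7 {E : Type*} [AddCommGroup E] [Module.Free ℤ E] [Module.Finite ℤ E]
    (ω : E →ₗ[ℤ] E →ₗ[ℤ] ℤ) (hskew : ∀ a b : E, ω a b = - ω b a)
    {A : Type*} [Ring A] [Algebra ℂ A]
    (ζ : ℂ) (hζ : ζ ≠ 0) (Z : Module.Basis E ℂ A) (hone : Z 0 = 1)
    (hmul : ∀ a b : E, Z a * Z b = ζ ^ (ω a b) • Z (a + b))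
    (N : ℕ) (hN : 1 ≤ N) (hprim : IsPrimitiveRoot (ζ ^ 2) N)
    (S : Set E)
    (hS : ∀ e : E, ∃! s : E, s ∈ S ∧ e - s ∈ kernelLattice ω N) :
    (∃ B : Module.Basis S (Subalgebra.center ℂ A) A, ∀ s : S, B s = Z (s : E)) ∧
    Module.Free (Subalgebra.center ℂ A) A ∧
    Module.rank (Subalgebra.center ℂ A) A =
      (Nat.card (E ⧸ kernelLattice ω N) : Cardinal) := by
  classical
  set E₀ := kernelLattice ω N with hE₀def
  set C := Subalgebra.center ℂ A with hCdef
  -- basic instances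
  have hA : Nontrivial A := nontrivial_of_ne (Z 0) 0 (Z.ne_zero 0)
  have hC : Nontrivial C := by
    refine ⟨1, 0, fun h => ?_⟩
    exact one_ne_zero (congrArg Subtype.val h : (1 : A) = 0)
  -- ζ-power lemma
  have hziff : ∀ m : ℤ, ζ ^ m = ζ ^ (-m) ↔ (N : ℤ) ∣ m := by
    intro m
    rw [← hprim.zpow_eq_one_iff_dvd]
    have key : (ζ ^ 2) ^ m = ζ ^ m * ζ ^ m := by rw [sq, mul_zpow]
    constructor
    · intro h
      rw [key]
      nth_rewrite 2 [h]
      rw [← zpow_add₀ hζ, add_neg_cancel, zpow_zero]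
    · intro h
      rw [key] at h
      rw [zpow_neg]
      exact eq_inv_of_mul_eq_one_left h
  -- key multiplication lemmas
  have key_right : ∀ (x : A) (e f : E),
      Z.repr (x * Z f) (e + f) = ζ ^ (ω e f) * Z.repr x e := by
    intro x e f
    have h : (Z.coord (e + f)).comp (LinearMap.mulRight ℂ (Z f)) = ζ ^ (ω e f) • Z.coord e := by
      refine Z.ext fun a => ?_
      simp only [LinearMap.coe_comp, Function.comp_apply, LinearMap.mulRight_apply,
        LinearMap.smul_apply, Module.Basis.coord_apply, hmul a f, map_smul, Finsupp.smul_apply,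
        Module.Basis.repr_self, smul_eq_mul]
      rw [Finsupp.single_apply, Finsupp.single_apply]
      by_cases hae : a = e
      · subst hae; simp
      · rw [if_neg (by simpa using hae), if_neg hae, mul_zero, mul_zero]
    simpa using DFunLike.congr_fun h x
  have key_left : ∀ (x : A) (e f : E),
      Z.repr (Z f * x) (f + e) = ζ ^ (ω f e) * Z.repr x e := by
    intro x e f
    have h : (Z.coord (f + e)).comp (LinearMap.mulLeft ℂ (Z f)) = ζ ^ (ω f e) • Z.coord e := by
      refine Z.ext fun a => ?_
      simp only [LinearMap.coe_comp, Function.comp_apply, LinearMap.mulLeft_apply,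
        LinearMap.smul_apply, Module.Basis.coord_apply, hmul f a, map_smul, Finsupp.smul_apply,
        Module.Basis.repr_self, smul_eq_mul]
      rw [Finsupp.single_apply, Finsupp.single_apply]
      by_cases hae : a = e
      · subst hae; simp
      · rw [if_neg (by simpa using hae), if_neg hae, mul_zero, mul_zero]
    simpa using DFunLike.congr_fun h x
  -- characterization of the center
  have hcen : ∀ x : A, x ∈ C ↔ ∀ e : E, Z.repr x e ≠ 0 → e ∈ E₀ := by
    intro x
    rw [hCdef, Subalgebra.mem_center_iff]
    constructor
    · intro h e he f
      have h1 := key_right x e f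
      have h2 := key_left x e f
      rw [h (Z f), add_comm f e] at h2
      rw [h2] at h1
      have hzz : ζ ^ (ω e f) = ζ ^ (-(ω e f)) := by
        have := mul_right_cancel₀ he h1.symm
        rw [this, hskew f e]
      exact (hziff _).mp hzz
    · intro h b
      have hb : ∀ f : E, Z f * x = x * Z f := by
        intro f
        apply Z.repr.injective
        ext g
        have h1 : Z.repr (x * Z f) g = ζ ^ (ω (g - f) f) * Z.repr x (g - f) := by
          have := key_right x (g - f) f
          rwa [sub_add_cancel] at this
        have h2 : Z.repr (Z f * x) g = ζ ^ (ω f (g - f)) * Z.repr x (g - f) := by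
          have := key_left x (g - f) f
          rwa [show f + (g - f) = g by abel] at this
        rw [h1, h2]
        by_cases hz0 : Z.repr x (g - f) = 0
        · rw [hz0, mul_zero, mul_zero]
        · have hmem := h _ hz0
          have : ζ ^ (ω f (g - f)) = ζ ^ (ω (g - f) f) := by
            rw [hskew f (g - f)]
            exact ((hziff _).mpr (hmem f)).symm
          rw [this]
      have hLR : LinearMap.mulRight ℂ x = LinearMap.mulLeft ℂ x := by
        refine Z.ext fun f => ?_
        simp only [LinearMap.mulRight_apply, LinearMap.mulLeft_apply]
        exact hb f
      exact DFunLike.congr_fun hLR b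
  -- representatives
  choose σ hσ using fun e => (hS e).exists
  have huniq : ∀ s₁ ∈ S, ∀ s₂ ∈ S, s₁ - s₂ ∈ E₀ → s₁ = s₂ := by
    intro s₁ h₁ s₂ h₂ hd
    exact (hS s₁).unique ⟨h₁, by rw [sub_self]; exact zero_mem _⟩ ⟨h₂, hd⟩
  -- the subalgebra smul
  have hsmul : ∀ (c : C) (a : A), c • a = (c : A) * a := fun c a => by
    rw [Subalgebra.smul_def, smul_eq_mul]
  -- linear independence
  have hli : LinearIndependent C (fun s : S => Z (s : E)) := by
    rw [linearIndependent_iff]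
    intro l hl
    have hsum : (l.sum fun s c => (c : A) * Z (s : E)) = 0 := by
      rw [Finsupp.linearCombination_apply] at hl
      rw [← hl]
      exact Finsupp.sum_congr fun s _ => (hsmul _ _).symm
    refine Finsupp.ext fun s₀ => ?_
    rw [Finsupp.zero_apply]
    have hrepr0 : ∀ g : E, Z.repr ((l s₀ : A)) g = 0 := by
      intro g
      by_cases hg : g ∈ E₀
      · -- evaluate the sum at g + s₀
        by_cases hs₀ : s₀ ∈ l.support
        · have hp : Z.repr (l.sum fun s c => (c : A) * Z (s : E)) (g + (s₀ : E)) = 0 := by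
            rw [hsum]; simp
          rw [Finsupp.sum, map_sum, Finsupp.finset_sum_apply] at hp
          have hterm : ∀ s ∈ l.support, s ≠ s₀ →
              Z.repr ((l s : A) * Z (s : E)) (g + (s₀ : E)) = 0 := by
            intro s _ hne
            have hkey := key_right ((l s : A)) (g + (s₀ : E) - (s : E)) (s : E)
            rw [show g + (s₀ : E) - (s : E) + (s : E) = g + (s₀ : E) by abel] at hkey
            rw [hkey]
            by_cases hz0 : Z.repr ((l s : A)) (g + (s₀ : E) - (s : E)) = 0
            · rw [hz0, mul_zero]
            · exfalso
              have hmem := (hcen _).mp (l s).2 _ hz0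
              have hd : (s₀ : E) - (s : E) ∈ E₀ := by
                have := sub_mem hmem hg
                rwa [show g + (s₀ : E) - (s : E) - g = (s₀ : E) - (s : E) by abel] at this
              exact hne (Subtype.ext (huniq _ s₀.2 _ s.2 hd).symm)
          rw [Finset.sum_eq_single_of_mem s₀ hs₀ hterm] at hp
          have hkey := key_right ((l s₀ : A)) g (s₀ : E)
          rw [hkey] at hp
          exact (mul_eq_zero.mp hp).resolve_left (zpow_ne_zero _ hζ)
        · rw [Finsupp.notMem_support_iff.mp hs₀]
          simp
      · by_contra hz0
        exact hg ((hcen _).mp (l s₀).2 g hz0)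
    have : (l s₀ : A) = 0 := by
      apply Z.repr.injective
      refine Finsupp.ext fun g => ?_
      simp [hrepr0 g]
    exact ZeroMemClass.coe_eq_zero.mp this
  -- spanning
  have hspanZ : ∀ e : E, Z e ∈ Submodule.span C (Set.range fun s : S => Z (s : E)) := by
    intro e
    obtain ⟨hmemS, hsub⟩ := hσ e
    have hc : (ζ ^ (-(ω (e - σ e) (σ e)))) • Z (e - σ e) ∈ C := by
      rw [hcen]
      intro g hg
      have : Z.repr ((ζ ^ (-(ω (e - σ e) (σ e)))) • Z (e - σ e)) g =
          (ζ ^ (-(ω (e - σ e) (σ e)))) * (Finsupp.single (e - σ e) (1:ℂ)) g := by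
        rw [map_smul, Module.Basis.repr_self]; rfl
      rw [this, Finsupp.single_apply] at hg
      by_cases heq : e - σ e = g
      · rw [← heq]; exact hsub
      · rw [if_neg heq, mul_zero] at hg; exact absurd rfl hg
    have hz : (⟨_, hc⟩ : C) • Z (σ e) = Z e := by
      rw [hsmul]
      show ((ζ ^ (-(ω (e - σ e) (σ e)))) • Z (e - σ e)) * Z (σ e) = Z e
      rw [smul_mul_assoc, hmul, smul_smul, ← zpow_add₀ hζ, neg_add_cancel, zpow_zero, one_smul,
        sub_add_cancel]
    rw [← hz]
    exact Submodule.smul_mem _ _ (Submodule.subset_span ⟨⟨σ e, hmemS⟩, rfl⟩)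
  have hspan : ⊤ ≤ Submodule.span C (Set.range fun s : S => Z (s : E)) := by
    intro x _
    rw [← Z.linearCombination_repr x, Finsupp.linearCombination_apply, Finsupp.sum]
    refine Submodule.sum_mem _ fun e _ => ?_
    have : (Z.repr x e) • Z e = (algebraMap ℂ C (Z.repr x e)) • Z e :=
      (algebraMap_smul C _ _).symm
    rw [this]
    exact Submodule.smul_mem _ _ (hspanZ e)
  -- the basis
  let B : Module.Basis S C A := Module.Basis.mk hli hspan
  have hB : ∀ s : S, B s = Z (s : E) := fun s => Module.Basis.mk_apply hli hspan s
  refine ⟨⟨B, hB⟩, Module.Free.of_basis B, ?_⟩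
  -- rank computation
  -- finiteness of the quotient
  haveI : NeZero N := ⟨by omega⟩
  let ι := Module.Free.ChooseBasisIndex ℤ E
  let b : Module.Basis ι ℤ E := Module.Free.chooseBasis ℤ E
  let φ : E →+ (ι → ZMod N) := AddMonoidHom.mk'
    (fun e i => ((b.repr e i : ℤ) : ZMod N))
    (by intro x y; funext i; simp [map_add, Finsupp.add_apply])
  have hker : φ.ker ≤ E₀ := by
    intro e he f
    have hdvd : ∀ i, (N : ℤ) ∣ b.repr e i := by
      intro i
      have : ((b.repr e i : ℤ) : ZMod N) = 0 := congrFun he i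
      exact (ZMod.intCast_zmod_eq_zero_iff_dvd _ _).mp this
    have hrep : ω e f = ∑ i, b.repr e i * ω (b i) f := by
      conv_lhs => rw [← b.sum_repr e]
      rw [map_sum, LinearMap.sum_apply]
      refine Finset.sum_congr rfl fun i _ => ?_
      rw [map_smul, LinearMap.smul_apply, smul_eq_mul]
    rw [hrep]
    exact Finset.dvd_sum fun i _ => Dvd.dvd.mul_right (hdvd i) _
  haveI hfin1 : Finite (E ⧸ φ.ker) :=
    Finite.of_equiv _ (QuotientAddGroup.quotientKerEquivRange φ).toEquiv.symm
  haveI hfin : Finite (E ⧸ E₀) := by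
    have hsurj : Function.Surjective
        (QuotientAddGroup.map φ.ker E₀ (AddMonoidHom.id E) hker) := by
      intro q
      obtain ⟨e, rfl⟩ := QuotientAddGroup.mk_surjective q
      exact ⟨QuotientAddGroup.mk e, rfl⟩
    exact Finite.of_surjective _ hsurj
  -- S ≃ E ⧸ E₀
  have hbij : Function.Bijective (fun s : S => (QuotientAddGroup.mk (s : E) : E ⧸ E₀)) := by
    constructor
    · intro s₁ s₂ h
      rw [QuotientAddGroup.eq] at h
      have : (s₁ : E) - (s₂ : E) ∈ E₀ := by
        have := neg_mem h
        rwa [show -(-(s₁ : E) + (s₂ : E)) = (s₁ : E) - (s₂ : E) by abel] at this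
      exact Subtype.ext (huniq _ s₁.2 _ s₂.2 this)
    · intro q
      obtain ⟨e, rfl⟩ := QuotientAddGroup.mk_surjective q
      obtain ⟨hmemS, hsub⟩ := hσ e
      refine ⟨⟨σ e, hmemS⟩, ?_⟩
      rw [QuotientAddGroup.eq]
      rwa [show -(σ e) + e = e - σ e by abel]
  haveI : Finite ↥S := Finite.of_equiv _ (Equiv.ofBijective _ hbij).symm
  haveI : Fintype ↥S := Fintype.ofFinite _
  rw [rank_eq_card_basis B]
  have hcard : Fintype.card ↥S = Nat.card (E ⧸ E₀) := by
    rw [Fintype.card_eq_nat_card]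
    exact Nat.card_eq_of_bijective _ hbij
  rw [hcard]
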